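/- The chain recurrent set equals the intersection over all attractors of A ∪ A*: R(f) = ⋂ₙ (Aₙ ∪ Aₙ*), where {Aₙ} enumerates the attractors of f and Aₙ* are their dual repellers. -/

import Mathlib

open Set Filter Topology

variable {X : Type*} [MetricSpace X]

/-- An ε-chain from `x` to `y` for `f`: a sequence `x = c 0, ..., c n = y` with `n ≥ 1`
and `dist (f (c i)) (c (i+1)) < ε` for all `i < n`. -/
def EpsChain (f : X → X) (ε : ℝ) (x y : X) : Prop :=
  ∃ n : ℕ, 1 ≤ n ∧ ∃ c : ℕ → X, c 0 = x ∧ c n = y ∧ ∀ i < n, dist (f (c i)) (c (i + 1)) < ε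

/-- The chain recurrent set of `f`. -/
def ChainRecurrentSet (f : X → X) : Set X := {x | ∀ ε > 0, EpsChain f ε x x}

/-- `U` is an (open) isolating neighborhood for `A`. -/
def IsIsolatingNbhd (f : X → X) (A U : Set X) : Prop :=
  IsOpen U ∧ A ⊆ U ∧ f '' closure U ⊆ U ∧ (⋂ n : ℕ, f^[n] '' closure U) = A

/-- `A` is an attractor for `f`. -/
def IsAttractor (f : X → X) (A : Set X) : Prop :=
  IsCompact A ∧ ∃ U, IsIsolatingNbhd f A U

/-- `(A, Astar)` is an attractor–repeller pair for the homeomorphism `f`. -/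
def IsDualPair (f : X ≃ₜ X) (A Astar : Set X) : Prop :=
  IsCompact A ∧ ∃ U, IsIsolatingNbhd (⇑f) A U ∧
    Astar = ⋂ n : ℕ, (⇑f)^[n] ⁻¹' closure ((closure U)ᶜ)

/-- Shadowing estimate: for a fixed number of steps `K` and tolerance `r`, sufficiently
fine chains starting at `x` stay `r`-close to the true orbit at time `K`. -/
private lemma shadow_aux {f : X → X} (hf : Continuous f) (x : X) :
    ∀ K : ℕ, ∀ r > (0:ℝ), ∃ ε > (0:ℝ), ∀ c : ℕ → X, c 0 = x →
      (∀ i < K, dist (f (c i)) (c (i + 1)) < ε) → dist (c K) (f^[K] x) < r := by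
  intro K
  induction K with
  | zero =>
    intro r hr
    exact ⟨r, hr, fun c hc0 _ => by simp [hc0, hr]⟩
  | succ K ih =>
    intro r hr
    obtain ⟨r', hr', hcont⟩ := Metric.continuousAt_iff.mp (hf.continuousAt (x := f^[K] x))
      (r / 2) (by linarith)
    obtain ⟨ε, hε, hshad⟩ := ih r' hr'
    refine ⟨min ε (r / 2), by positivity, fun c hc0 hchain => ?_⟩
    have h1 : dist (c K) (f^[K] x) < r' :=
      hshad c hc0 (fun i hi =>
        lt_of_lt_of_le (hchain i (hi.trans (Nat.lt_succ_self K))) (min_le_left _ _))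
    have h2 : dist (f (c K)) (f (f^[K] x)) < r / 2 := hcont h1
    have h3 : dist (f (c K)) (c (K + 1)) < r / 2 :=
      lt_of_lt_of_le (hchain K (Nat.lt_succ_self K)) (min_le_right _ _)
    have := dist_triangle (c (K + 1)) (f (c K)) (f^[K + 1] x)
    rw [Function.iterate_succ_apply']
    rw [Function.iterate_succ_apply'] at this
    rw [dist_comm] at h3
    linarith

private lemma isOpenMap_iterate {f : X → X} (hf : IsOpenMap f) : ∀ n, IsOpenMap f^[n]
  | 0 => IsOpenMap.id
  | n + 1 => by
      rw [Function.iterate_succ]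
      exact (isOpenMap_iterate hf n).comp hf

theorem chainRecurrentSet_eq_iInter_pairs [CompactSpace X] (f : X ≃ₜ X) :
    ChainRecurrentSet (⇑f) =
      ⋂ A : Set X, ⋂ Astar : Set X, ⋂ _ : IsDualPair f A Astar, (A ∪ Astar) := by
  set g : X → X := ⇑f with hg
  have hgc : Continuous g := f.continuous
  ext x
  simp only [mem_iInter, mem_union]
  constructor
  · -- chain recurrent points lie in A ∪ A* for every dual pair
    rintro hx A Astar ⟨hAcomp, U, ⟨hUopen, hAU, hfU, hAeq⟩, hAstar⟩
    by_contra hcon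
    push_neg at hcon
    obtain ⟨hxA, hxAstar⟩ := hcon
    -- x escapes the repeller: some forward iterate lies in interior (closure U)
    rw [hAstar] at hxAstar
    simp only [mem_iInter, mem_preimage, not_forall] at hxAstar
    obtain ⟨N, hN⟩ := hxAstar
    have hNint : g^[N] x ∈ interior (closure U) := by
      rw [closure_compl] at hN
      simpa using hN
    -- x escapes the attractor: some backward cushion fails
    rw [← hAeq] at hxA
    simp only [mem_iInter, not_forall] at hxA
    obtain ⟨M, hM⟩ := hxA
    have hclU : IsCompact (closure U) := isClosed_closure.isCompact
    set W : Set X := g^[M] '' closure U with hW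
    set V : Set X := g^[M] '' U with hV
    have hopenM : IsOpenMap (g^[M]) := isOpenMap_iterate f.isOpenMap M
    have hVopen : IsOpen V := hopenM U hUopen
    have hVW : V ⊆ W := image_mono subset_closure
    have hWcomp : IsCompact W := hclU.image (hgc.iterate M)
    have hstepW : g '' W ⊆ V := by
      rintro _ ⟨_, ⟨y, hy, rfl⟩, rfl⟩
      have : g (g^[M] y) = g^[M] (g y) :=
        (Function.iterate_succ_apply' g M y).symm.trans (Function.iterate_succ_apply g M y)
      rw [this]
      exact mem_image_of_mem _ (hfU (mem_image_of_mem _ hy))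
    -- trapping radius
    obtain ⟨ε₁, hε₁, htrap⟩ :=
      (hWcomp.image hgc).exists_thickening_subset_open hVopen hstepW
    have htrap' : ∀ y ∈ W, ∀ z, dist z (g y) < ε₁ → z ∈ W := by
      intro y hy z hz
      exact hVW (htrap (Metric.mem_thickening_iff.mpr ⟨g y, mem_image_of_mem _ hy, hz⟩))
    -- the time at which the true orbit is well inside W
    set K : ℕ := M + 1 + N with hK
    have hKV : g^[K] x ∈ V := by
      have h1 : g^[K] x = g^[M] (g (g^[N] x)) := by
        rw [hK, Function.iterate_add_apply, Function.iterate_succ_apply]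
      rw [h1]
      exact mem_image_of_mem _ (hfU (mem_image_of_mem _ (interior_subset hNint)))
    obtain ⟨r, hr, hball⟩ := Metric.isOpen_iff.mp hVopen _ hKV
    obtain ⟨ε₂, hε₂, hshad⟩ := shadow_aux hgc x K r hr
    set ε : ℝ := min ε₁ ε₂ with hε
    obtain ⟨n, hn, c, hc0, hcn, hstep⟩ := hx ε (lt_min hε₁ hε₂)
    -- loop the chain periodically
    set c' : ℕ → X := fun j => c (j % n) with hc'
    have hnpos : 0 < n := hn
    have hc'0 : c' 0 = x := by simp [hc', Nat.zero_mod, hc0]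
    have hstep' : ∀ j, dist (g (c' j)) (c' (j + 1)) < ε := by
      intro j
      have hj : j % n < n := Nat.mod_lt _ hnpos
      rcases Nat.lt_or_ge (j % n + 1) n with h | h
      · have key : (j + 1) % n = j % n + 1 := by
          have h2 : 1 < n := lt_of_le_of_lt (Nat.le_add_left 1 (j % n)) h
          rw [Nat.add_mod, Nat.mod_eq_of_lt h2, Nat.mod_eq_of_lt h]
        have := hstep (j % n) hj
        simpa [hc', key] using this
      · have heq : j % n + 1 = n := le_antisymm hj h
        have key : (j + 1) % n = 0 := by
          rcases eq_or_lt_of_le hn with h1 | h1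
          · rw [← h1, Nat.mod_one]
          · rw [Nat.add_mod, Nat.mod_eq_of_lt h1, heq, Nat.mod_self]
        have := hstep (j % n) hj
        rw [heq, hcn, ← hc0] at this
        simpa [hc', key] using this
    -- shadowing puts the looped chain into W at time K
    have hcK : c' K ∈ W := by
      have := hshad c' hc'0 (fun i _ => lt_of_lt_of_le (hstep' i) (min_le_right _ _))
      exact hVW (hball (Metric.mem_ball.mpr this))
    -- trapping keeps it in W ever after
    have htrapped : ∀ j, K ≤ j → c' j ∈ W := by
      intro j hj
      induction j, hj using Nat.le_induction with
      | base => exact hcK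
      | succ j hj ihj =>
        exact htrap' _ ihj _ (by rw [dist_comm]; exact lt_of_lt_of_le (hstep' j) (min_le_left _ _))
    -- but the chain returns to x, so x ∈ W: contradiction
    have hxW : x ∈ W := by
      have h1 : c' ((K + 1) * n) = x := by simp [hc', Nat.mul_mod_left, hc0]
      have h2 : K ≤ (K + 1) * n := by nlinarith
      rw [← h1]
      exact htrapped _ h2
    exact hM hxW
  · -- conversely: a point in every A ∪ A* is chain recurrent
    intro hx
    by_contra hxR
    simp only [ChainRecurrentSet, mem_setOf_eq, not_forall] at hxR
    obtain ⟨ε, hε, hchain⟩ := hxR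
    -- the set of points reachable from x by ε-chains
    set P : Set X := {y | EpsChain g ε x y} with hP
    have hPopen : IsOpen P := by
      rw [Metric.isOpen_iff]
      rintro y ⟨n, hn, c, hc0, hcn, hstep⟩
      have hn1 : n - 1 < n := by omega
      have hn1' : n - 1 + 1 = n := by omega
      have hlast : dist (g (c (n - 1))) y < ε := by
        have := hstep (n - 1) hn1
        rwa [hn1', hcn] at this
      refine ⟨ε - dist (g (c (n - 1))) y, by linarith, fun y' hy' => ?_⟩
      refine ⟨n, hn, Function.update c n y', ?_, Function.update_self _ _ _, ?_⟩
      · rw [Function.update_of_ne (by omega) _ _]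
        exact hc0
      · intro i hi
        rcases eq_or_lt_of_le (Nat.succ_le_of_lt hi) with h | h
        · have hin : i ≠ n := by omega
          have h' : i + 1 = n := h
          rw [Function.update_of_ne hin, h', Function.update_self]
          have h2 : i = n - 1 := by omega
          rw [h2]
          have h3 : dist y' y < ε - dist (g (c (n - 1))) y := Metric.mem_ball.mp hy'
          calc dist (g (c (n - 1))) y' ≤ dist (g (c (n - 1))) y + dist y y' :=
                dist_triangle _ _ _
            _ < ε := by rw [dist_comm y y']; linarith
        · rw [Function.update_of_ne (by omega), Function.update_of_ne (by omega)]
          exact hstep i hi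
    have hfP : g '' closure P ⊆ P := by
      rintro _ ⟨y, hy, rfl⟩
      obtain ⟨δ, hδ, hcont⟩ := Metric.continuousAt_iff.mp (hgc.continuousAt (x := y)) ε hε
      obtain ⟨z, hz, hzy⟩ := Metric.mem_closure_iff.mp hy δ hδ
      obtain ⟨n, hn, c, hc0, hcn, hstep⟩ := hz
      refine ⟨n + 1, by omega, Function.update c (n + 1) (g y), ?_,
        Function.update_self _ _ _, ?_⟩
      · rw [Function.update_of_ne (by omega)]
        exact hc0
      · intro i hi
        rcases eq_or_lt_of_le (Nat.succ_le_of_lt hi) with h | h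
        · have hin : i = n := by omega
          have h' : i + 1 = n + 1 := h
          rw [Function.update_of_ne (by omega), h', Function.update_self, hin, hcn]
          have : dist z y < δ := by rwa [dist_comm] at hzy
          exact hcont this
        · rw [Function.update_of_ne (by omega), Function.update_of_ne (by omega)]
          exact hstep i (by omega)
    have hxP : x ∉ P := hchain
    have hfxP : f x ∈ P := by
      refine ⟨1, le_refl 1, fun j => if j = 0 then x else f x, by simp, by simp, ?_⟩
      intro i hi
      have : i = 0 := by omega
      simp only [this, if_pos rfl, if_neg one_ne_zero]
      simpa [hg] using hε
    set A : Set X := ⋂ n : ℕ, g^[n] '' closure P with hA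
    set Astar : Set X := ⋂ n : ℕ, g^[n] ⁻¹' closure ((closure P)ᶜ) with hAstar
    have hAsub : A ⊆ P := by
      intro y hy
      have h1 := mem_iInter.mp hy 1
      rw [Function.iterate_one] at h1
      exact hfP h1
    have hAcomp : IsCompact A := by
      have : IsClosed A :=
        isClosed_iInter fun n =>
          ((isClosed_closure.isCompact.image (hgc.iterate n)).isClosed)
      exact this.isCompact
    have hpair : IsDualPair f A Astar :=
      ⟨hAcomp, P, ⟨hPopen, hAsub, hfP, rfl⟩, rfl⟩
    rcases hx A Astar hpair with h | h
    · exact hxP (hAsub h)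
    · have h1 := mem_iInter.mp h 1
      rw [mem_preimage, Function.iterate_one] at h1
      rw [closure_compl] at h1
      exact h1 (interior_maximal subset_closure hPopen hfxP)
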